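/- Let R be a complete local Noetherian domain of characteristic p > 0 with \mathfrak{a}, J \subseteq R ideals, \mathfrak{a} \subseteq \sqrt{J}. Then the F-threshold up to Frobenius closure can be computed using integral closures of powers: \tilde{c}^J(\mathfrak{a}) = sup\{ n/p^e : (\overline{\mathfrak{a}^n})^{1/p^e} \not\subseteq J R_{perf} \}. -/

import Mathlib

/-- The Frobenius (bracket) power `I^{[q]}` of an ideal. -/
def frobPow {R : Type} [CommRing R] (I : Ideal R) (q : ℕ) : Ideal R :=
  Ideal.span ((· ^ q) '' (I : Set R))

/-- The Frobenius closure of an ideal in a ring of characteristic `p`. -/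
def frobClosure {R : Type} [CommRing R] (p : ℕ) (I : Ideal R) : Set R :=
  {x | ∃ e : ℕ, x ^ p ^ e ∈ frobPow I (p ^ e)}

/-- The tight closure of an ideal in a domain of characteristic `p`. -/
def tightClosure {R : Type} [CommRing R] (p : ℕ) (I : Ideal R) : Set R :=
  {x | ∃ c : R, c ≠ 0 ∧ ∀ e : ℕ, c * x ^ p ^ e ∈ frobPow I (p ^ e)}

/-- Integral closure of an ideal: elements satisfying an equation of integral dependence. -/
def idealIntClosure {R : Type} [CommRing R] (I : Ideal R) : Set R :=
  {x | ∃ n : ℕ, 0 < n ∧ ∃ c : ℕ → R, (∀ i, 1 ≤ i → i ≤ n → c i ∈ I ^ i) ∧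
    x ^ n + ∑ i ∈ Finset.Icc 1 n, c i * x ^ (n - i) = 0}
section frob
variable {R : Type} [CommRing R]

lemma mem_frobPow_of_mem {I : Ideal R} {x : R} (hx : x ∈ I) (q : ℕ) :
    x ^ q ∈ frobPow I q :=
  Ideal.subset_span ⟨x, hx, rfl⟩

lemma frobPow_mono {I I' : Ideal R} (h : I ≤ I') (q : ℕ) : frobPow I q ≤ frobPow I' q :=
  Ideal.span_mono (Set.image_mono h)

lemma le_frobClosure (p : ℕ) (I : Ideal R) : (I : Set R) ⊆ frobClosure p I := by
  intro x hx
  refine ⟨0, ?_⟩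
  rw [pow_zero]
  have h := mem_frobPow_of_mem hx 1
  exact h

variable (p : ℕ) [Fact p.Prime] [CharP R p]

lemma pow_mem_frobPow {I : Ideal R} {y : R} {q : ℕ} (b : ℕ) (hy : y ∈ frobPow I q) :
    y ^ p ^ b ∈ frobPow I (q * p ^ b) := by
  haveI : ExpChar R p := ExpChar.prime Fact.out
  induction hy using Submodule.span_induction with
  | mem x h =>
    obtain ⟨a, ha, rfl⟩ := h
    rw [← pow_mul]
    exact mem_frobPow_of_mem ha _
  | zero => rw [zero_pow (pow_ne_zero _ (Nat.Prime.ne_zero Fact.out))]; exact zero_mem _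
  | add x y _ _ hx hy => rw [add_pow_char_pow]; exact add_mem hx hy
  | smul r x _ hx => rw [smul_eq_mul, mul_pow]; exact Ideal.mul_mem_left _ _ hx

lemma frobPow_frobPow_le {I : Ideal R} (q b : ℕ) :
    frobPow (frobPow I q) (p ^ b) ≤ frobPow I (q * p ^ b) := by
  refine Ideal.span_le.2 ?_
  rintro _ ⟨y, hy, rfl⟩
  exact pow_mem_frobPow p b hy

lemma le_frobPow_frobPow {I : Ideal R} (q b : ℕ) :
    frobPow I (q * b) ≤ frobPow (frobPow I q) b := by
  refine Ideal.span_le.2 ?_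
  rintro _ ⟨x, hx, rfl⟩
  show x ^ (q * b) ∈ frobPow (frobPow I q) b
  rw [pow_mul]
  exact mem_frobPow_of_mem (mem_frobPow_of_mem hx q) b

lemma not_mem_frobClosure_pow {J : Ideal R} {x : R} {e : ℕ} (d : ℕ)
    (hx : x ∉ frobClosure p (frobPow J (p ^ e))) :
    x ^ p ^ d ∉ frobClosure p (frobPow J (p ^ (e + d))) := by
  rintro ⟨e', he'⟩
  refine hx ⟨d + e', ?_⟩
  have h1 : (x ^ p ^ d) ^ p ^ e' ∈ frobPow J (p ^ (e + d) * p ^ e') :=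
    frobPow_frobPow_le p _ e' he'
  have h2 : (x ^ p ^ d) ^ p ^ e' = x ^ p ^ (d + e') := by
    rw [← pow_mul, ← pow_add]
  have h3 : p ^ (e + d) * p ^ e' = p ^ e * p ^ (d + e') := by ring
  rw [h2, h3] at h1
  exact le_frobPow_frobPow (p ^ e) (p ^ (d + e')) h1

end frob
section perf
variable {S : Type} [CommRing S] (p : ℕ) [Fact p.Prime] [CharP S p] [PerfectRing S p]

lemma frobPow_eq_map_iterate (K : Ideal S) (k : ℕ) :
    frobPow K (p ^ k) = K.map (iterateFrobenius S p k) := by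
  have h : (fun x : S => x ^ p ^ k) '' K = ⇑(iterateFrobenius S p k) '' K := by
    ext y; simp [iterateFrobenius_def]
  rw [frobPow, h]
  rfl

lemma mem_of_pow_mem_frobPow {K : Ideal S} {z : S} (k : ℕ)
    (h : z ^ p ^ k ∈ frobPow K (p ^ k)) : z ∈ K := by
  rw [frobPow_eq_map_iterate p K k,
    Ideal.mem_map_iff_of_surjective _ (bijective_iterateFrobenius S p k).surjective] at h
  obtain ⟨w, hw, hwz⟩ := h
  have : iterateFrobenius S p k w = iterateFrobenius S p k z := by
    rw [hwz, iterateFrobenius_def]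
  rwa [← (bijective_iterateFrobenius S p k).injective this]

end perf
section maps
variable {R Rp : Type} [CommRing R] [CommRing Rp] (p : ℕ) [Fact p.Prime]
  [CharP R p] [CharP Rp p] (φ : R →+* Rp)

lemma map_frobPow_le (I : Ideal R) (q : ℕ) :
    (frobPow I q).map φ ≤ frobPow (I.map φ) q := by
  rw [frobPow, Ideal.map_span]
  refine Ideal.span_le.2 ?_
  rintro _ ⟨_, ⟨a, ha, rfl⟩, rfl⟩
  show φ (a ^ q) ∈ frobPow (I.map φ) q
  rw [map_pow]
  exact mem_frobPow_of_mem (Ideal.mem_map_of_mem φ ha) q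

lemma frobPow_map_le (I : Ideal R) (b : ℕ) :
    frobPow (I.map φ) (p ^ b) ≤ (frobPow I (p ^ b)).map φ := by
  haveI : ExpChar Rp p := ExpChar.prime Fact.out
  refine Ideal.span_le.2 ?_
  rintro _ ⟨y, hy, rfl⟩
  show y ^ p ^ b ∈ (frobPow I (p ^ b)).map φ
  have hy' : y ∈ Ideal.span (⇑φ '' (I : Set R)) := by
    rw [← Ideal.map_span φ, Ideal.span_eq]; exact hy
  clear hy
  induction hy' using Submodule.span_induction with
  | mem w hw =>
    obtain ⟨a, ha, rfl⟩ := hw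
    rw [← map_pow]
    exact Ideal.mem_map_of_mem φ (mem_frobPow_of_mem ha _)
  | zero => rw [zero_pow (pow_ne_zero _ (Nat.Prime.ne_zero Fact.out))]; exact zero_mem _
  | add u v _ _ hu hv => rw [add_pow_char_pow]; exact add_mem hu hv
  | smul r u _ hu => rw [smul_eq_mul, mul_pow]; exact Ideal.mul_mem_left _ _ hu

end maps
section stepA
variable {R Rp : Type} [CommRing R] [CommRing Rp] (p : ℕ) [Fact p.Prime]
  [CharP R p] [CharP Rp p] [IsDomain Rp] [PerfectRing Rp p]
  (φ : R →+* Rp)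

lemma mem_frobClosure_of_map_mem (hφ : Function.Injective φ)
    (hgen : ∀ x : Rp, ∃ (e : ℕ) (r : R), x ^ p ^ e = φ r)
    {I : Ideal R} {x : R} (h : φ x ∈ I.map φ) :
    x ∈ frobClosure p I := by
  haveI : ExpChar Rp p := ExpChar.prime Fact.out
  have h' : φ x ∈ Submodule.span Rp (⇑φ '' (I : Set R)) := by
    have h2 : φ x ∈ Ideal.span (⇑φ '' (I : Set R)) := by
      rw [← Ideal.map_span φ, Ideal.span_eq]; exact h
    exact h2
  rw [Submodule.mem_span_set'] at h'
  obtain ⟨n, f, g, hsum⟩ := h'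
  have hg : ∀ i : Fin n, ∃ a : R, a ∈ I ∧ φ a = (g i : Rp) := by
    intro i
    obtain ⟨a, ha, haeq⟩ := (g i).2
    exact ⟨a, ha, haeq⟩
  choose a ha hae using hg
  have hf : ∀ i : Fin n, ∃ (e : ℕ) (r : R), (f i) ^ p ^ e = φ r := fun i => hgen (f i)
  choose ev r hr using hf
  set E := Finset.univ.sup ev with hE
  have hEi : ∀ i : Fin n, ev i ≤ E := fun i => Finset.le_sup (Finset.mem_univ i)
  have hfE : ∀ i : Fin n, (f i) ^ p ^ E = φ ((r i) ^ p ^ (E - ev i)) := by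
    intro i
    have hsplit : p ^ E = p ^ ev i * p ^ (E - ev i) := by
      rw [← pow_add]
      congr 1
      have := hEi i
      omega
    rw [hsplit, pow_mul, hr i, ← map_pow]
  refine ⟨E, ?_⟩
  have key : φ (x ^ p ^ E) = φ (∑ i, (r i) ^ p ^ (E - ev i) * (a i) ^ p ^ E) := by
    rw [map_pow, ← hsum, sum_pow_char_pow, map_sum]
    refine Finset.sum_congr rfl fun i _ => ?_
    rw [smul_eq_mul, mul_pow, hfE i, ← hae i, map_mul, map_pow, map_pow]
  have keyR : x ^ p ^ E = ∑ i, (r i) ^ p ^ (E - ev i) * (a i) ^ p ^ E := hφ key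
  rw [keyR]
  exact Ideal.sum_mem _ fun i _ => Ideal.mul_mem_left _ _ (mem_frobPow_of_mem (ha i) _)

lemma stepA (hφ : Function.Injective φ)
    (hgen : ∀ x : Rp, ∃ (e : ℕ) (r : R), x ^ p ^ e = φ r)
    (J : Ideal R) (x : R) (e : ℕ) :
    (∃ z : Rp, z ^ p ^ e = φ x ∧ z ∉ J.map φ) ↔
      x ∉ frobClosure p (frobPow J (p ^ e)) := by
  obtain ⟨z₀, hz₀⟩ := (bijective_iterateFrobenius Rp p e).surjective (φ x)
  rw [iterateFrobenius_def] at hz₀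
  have key : z₀ ∈ J.map φ ↔ x ∈ frobClosure p (frobPow J (p ^ e)) := by
    constructor
    · intro hz
      have h1 : φ x ∈ frobPow (J.map φ) (p ^ e) := hz₀ ▸ mem_frobPow_of_mem hz _
      have h2 : φ x ∈ (frobPow J (p ^ e)).map φ := frobPow_map_le p φ J e h1
      exact mem_frobClosure_of_map_mem p φ hφ hgen h2
    · rintro ⟨e', he'⟩
      have h1 : x ^ p ^ e' ∈ frobPow J (p ^ e * p ^ e') :=
        frobPow_frobPow_le p _ e' he'
      have h2 : φ (x ^ p ^ e') ∈ (frobPow J (p ^ e * p ^ e')).map φ :=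
        Ideal.mem_map_of_mem φ h1
      have h3 : φ (x ^ p ^ e') ∈ frobPow (J.map φ) (p ^ e * p ^ e') :=
        map_frobPow_le φ J (p ^ e * p ^ e') h2
      have h4 : z₀ ^ p ^ (e + e') ∈ frobPow (J.map φ) (p ^ (e + e')) := by
        have heq : z₀ ^ p ^ (e + e') = φ (x ^ p ^ e') := by
          rw [map_pow, ← hz₀, ← pow_mul, ← pow_add]
        rw [heq, pow_add]
        exact h3
      exact mem_of_pow_mem_frobPow p _ h4
  constructor
  · rintro ⟨z, hz, hznot⟩ hxin
    have hzz : z = z₀ := by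
      have h : iterateFrobenius Rp p e z = iterateFrobenius Rp p e z₀ := by
        rw [iterateFrobenius_def, iterateFrobenius_def, hz, hz₀]
      exact (bijective_iterateFrobenius Rp p e).injective h
    exact hznot (hzz ▸ key.2 hxin)
  · intro hxnot
    exact ⟨z₀, hz₀, fun hz => hxnot (key.1 hz)⟩

end stepA
section intcl
variable {R : Type} [CommRing R]

lemma sum_ideal_le {ι : Type} (s : Finset ι) (T : ι → Ideal R) (K : Ideal R)
    (h : ∀ i ∈ s, T i ≤ K) : ∑ j ∈ s, T j ≤ K := by
  classical
  induction s using Finset.induction with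
  | empty => simp
  | insert _ _ hx ih =>
    rw [Finset.sum_insert hx]
    exact sup_le (h _ (Finset.mem_insert_self _ _))
      (ih fun i hi => h i (Finset.mem_insert_of_mem hi))

lemma ideal_le_sum {ι : Type} (s : Finset ι) (T : ι → Ideal R) {i : ι} (hi : i ∈ s) :
    T i ≤ ∑ j ∈ s, T j :=
  Finset.single_le_sum (f := T) (fun j _ => bot_le) hi

lemma mem_intClosure_of_mem {I : Ideal R} {x : R} (hx : x ∈ I) : x ∈ idealIntClosure I := by
  refine ⟨1, one_pos, fun _ => -x, fun i h1 h2 => ?_, ?_⟩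
  · have hi : i = 1 := le_antisymm h2 h1
    subst hi
    simpa using I.neg_mem hx
  · simp

lemma intClosure_pow_le {I : Ideal R} {x : R}
    (hx : x ∈ idealIntClosure I) : ∃ n : ℕ, 0 < n ∧ ∀ j : ℕ, x ^ (n + j) ∈ I ^ (j + 1) := by
  obtain ⟨n, hn, c, hc, heq⟩ := hx
  have hterm : ∀ (a b a' b' : ℕ), a = a' → b = b' →
      I ^ a * Ideal.span {x ^ b} = I ^ a' * Ideal.span {x ^ b'} := by
    rintro a b a' b' rfl rfl; rfl
  set D : ℕ → Ideal R := fun j => ∑ i ∈ Finset.Icc 1 n, I ^ (j + i) * Ideal.span {x ^ (n - i)}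
    with hD
  have base : x ^ n ∈ D 0 := by
    have hxn : x ^ n = ∑ i ∈ Finset.Icc 1 n, -(c i * x ^ (n - i)) := by
      rw [Finset.sum_neg_distrib]
      exact eq_neg_of_add_eq_zero_left heq
    rw [hxn]
    refine Ideal.sum_mem _ fun i hi => ?_
    obtain ⟨hi1, hi2⟩ := Finset.mem_Icc.1 hi
    refine ideal_le_sum _ _ hi ?_
    have h0 : I ^ (0 + i) = I ^ i := by rw [zero_add]
    rw [h0]
    exact neg_mem (Ideal.mul_mem_mul (hc i hi1 hi2) (Ideal.mem_span_singleton_self _))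
  have step : ∀ j, D j * Ideal.span {x} ≤ D (j + 1) := by
    intro j
    rw [hD, Finset.sum_mul]
    refine sum_ideal_le _ _ _ fun i hi => ?_
    obtain ⟨hi1, hi2⟩ := Finset.mem_Icc.1 hi
    have hmul : I ^ (j + i) * Ideal.span {x ^ (n - i)} * Ideal.span {x}
        = I ^ (j + i) * Ideal.span {x ^ (n - i + 1)} := by
      rw [mul_assoc, Ideal.span_singleton_mul_span_singleton, ← pow_succ]
    rw [hmul]
    rcases eq_or_lt_of_le hi1 with h1 | h1
    · -- i = 1
      have hi1' : i = 1 := h1.symm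
      subst hi1'
      rw [hterm (j + 1) (n - 1 + 1) (j + 1) n rfl (by omega)]
      have hspan : Ideal.span {x ^ n} ≤ D 0 := by
        rw [Ideal.span_singleton_le_iff_mem]
        exact base
      refine le_trans (Ideal.mul_mono_right hspan) ?_
      rw [hD, Finset.mul_sum]
      refine sum_ideal_le _ _ _ fun k hk => ?_
      have hkk : I ^ (j + 1) * (I ^ (0 + k) * Ideal.span {x ^ (n - k)})
          = I ^ (j + 1 + k) * Ideal.span {x ^ (n - k)} := by
        rw [← mul_assoc, ← pow_add]
        exact hterm _ _ _ _ (by omega) rfl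
      rw [hkk]
      exact ideal_le_sum (Finset.Icc 1 n)
        (fun i => I ^ (j + 1 + i) * Ideal.span {x ^ (n - i)}) hk
    · -- i ≥ 2
      have hmem : i - 1 ∈ Finset.Icc 1 n := Finset.mem_Icc.2 ⟨by omega, by omega⟩
      rw [hterm (j + i) (n - i + 1) (j + 1 + (i - 1)) (n - (i - 1)) (by omega) (by omega)]
      exact ideal_le_sum (Finset.Icc 1 n)
        (fun k => I ^ (j + 1 + k) * Ideal.span {x ^ (n - k)}) hmem
  have claim : ∀ j, x ^ (n + j) ∈ D j := by
    intro j
    induction j with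
    | zero => exact base
    | succ j ih =>
      have hpow : x ^ (n + (j + 1)) = x ^ (n + j) * x := by
        rw [show n + (j + 1) = (n + j) + 1 from rfl, pow_succ]
      rw [hpow]
      exact step j (Ideal.mul_mem_mul ih (Ideal.mem_span_singleton_self _))
  refine ⟨n, hn, fun j => ?_⟩
  refine sum_ideal_le _ _ _ (fun i hi => ?_) (claim j)
  obtain ⟨hi1, _⟩ := Finset.mem_Icc.1 hi
  exact le_trans Ideal.mul_le_left (Ideal.pow_le_pow_right (by omega))
end intcl

/-- For a complete local Noetherian domain of characteristic `p`, the F-threshold up to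
Frobenius closure can be computed using integral closures of powers:
`tilde c^J(𝔞) = sup { n/p^e : (closure of 𝔞^n)^{1/p^e} ⊄ J R_perf }`. -/
theorem stmt11 (p : ℕ) [Fact p.Prime] (R : Type) [CommRing R] [IsDomain R]
    [IsNoetherianRing R] [IsLocalRing R] [CharP R p]
    [IsAdicComplete (IsLocalRing.maximalIdeal R) R]
    (𝔞 J : Ideal R) (hrad : 𝔞 ≤ J.radical)
    (Rp : Type) [CommRing Rp] [IsDomain Rp] [CharP Rp p] [PerfectRing Rp p]
    (φ : R →+* Rp) (hφ : Function.Injective φ)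
    (hgen : ∀ x : Rp, ∃ (e : ℕ) (r : R), x ^ p ^ e = φ r)
    (L : ℝ)
    (hL : Filter.Tendsto
      (fun e : ℕ =>
        ((sSup {m : ℕ | ∃ x ∈ 𝔞 ^ m, x ∉ frobClosure p (frobPow J (p ^ e))} : ℕ) : ℝ)
          / (p : ℝ) ^ e)
      Filter.atTop (nhds L)) :
    L = sSup {t : ℝ | ∃ m e : ℕ, t = (m : ℝ) / (p : ℝ) ^ e ∧
      ∃ x ∈ idealIntClosure (𝔞 ^ m), ∃ z : Rp, z ^ p ^ e = φ x ∧ z ∉ J.map φ} := by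
  have hp1 : 1 < p := (Fact.out : p.Prime).one_lt
  have hppos : (0 : ℝ) < (p : ℝ) := by exact_mod_cast Nat.lt_of_lt_of_le Nat.zero_lt_one hp1.le
  have hpe : ∀ e : ℕ, (0 : ℝ) < (p : ℝ) ^ e := fun e => pow_pos hppos e
  set S' : ℕ → Set ℕ :=
    fun e => {m : ℕ | ∃ x ∈ 𝔞 ^ m, x ∉ frobClosure p (frobPow J (p ^ e))} with hS'
  set S : Set ℝ := {t : ℝ | ∃ m e : ℕ, t = (m : ℝ) / (p : ℝ) ^ e ∧
      ∃ x ∈ idealIntClosure (𝔞 ^ m), ∃ z : Rp, z ^ p ^ e = φ x ∧ z ∉ J.map φ} with hS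
  -- boundedness of the S' e
  obtain ⟨N, hN⟩ : ∃ N, 𝔞 ^ N ≤ J :=
    Ideal.exists_pow_le_of_le_radical_of_fg hrad (IsNoetherian.noetherian 𝔞)
  have hBdd : ∀ e : ℕ, BddAbove (S' e) := by
    intro e
    have hJr : J ≤ (frobPow J (p ^ e)).radical := fun y hy => ⟨p ^ e, mem_frobPow_of_mem hy _⟩
    obtain ⟨M, hM⟩ : ∃ M, J ^ M ≤ frobPow J (p ^ e) :=
      Ideal.exists_pow_le_of_le_radical_of_fg hJr (IsNoetherian.noetherian J)
    refine ⟨N * M, fun m hm => ?_⟩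
    by_contra hlt
    push_neg at hlt
    obtain ⟨x, hx, hnot⟩ := hm
    refine hnot (le_frobClosure p _ ?_)
    have h1 : 𝔞 ^ m ≤ 𝔞 ^ (N * M) := Ideal.pow_le_pow_right hlt.le
    have h2 : 𝔞 ^ (N * M) = (𝔞 ^ N) ^ M := pow_mul 𝔞 N M
    have h3 : (𝔞 ^ N) ^ M ≤ J ^ M := Ideal.pow_right_mono hN M
    exact hM (h3 (h2 ▸ h1 hx))
  -- (i) every element of S is ≤ L
  have hub : ∀ t ∈ S, t ≤ L := by
    rintro t ⟨m, e, rfl, x, hxint, hz⟩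
    have hxnot : x ∉ frobClosure p (frobPow J (p ^ e)) :=
      (stepA p φ hφ hgen J x e).1 hz
    obtain ⟨n, hn, hpow⟩ := intClosure_pow_le hxint
    -- comparison sequences
    have hmem : ∀ d : ℕ, n ≤ p ^ d →
        m * (p ^ d - n + 1) ∈ S' (d + e) := by
      intro d hnd
      have hx1 : x ^ p ^ d ∈ 𝔞 ^ (m * (p ^ d - n + 1)) := by
        have h1 : x ^ (n + (p ^ d - n)) ∈ (𝔞 ^ m) ^ (p ^ d - n + 1) := hpow (p ^ d - n)
        have h2 : n + (p ^ d - n) = p ^ d := by omega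
        rw [h2] at h1
        rw [pow_mul]
        exact h1
      have hx2 := not_mem_frobClosure_pow p d hxnot
      rw [Nat.add_comm e d] at hx2
      exact ⟨x ^ p ^ d, hx1, hx2⟩
    have hcompare : ∀ᶠ d : ℕ in Filter.atTop,
        ((m * (p ^ d - n + 1) : ℕ) : ℝ) / (p : ℝ) ^ (d + e)
          ≤ ((sSup (S' (d + e)) : ℕ) : ℝ) / (p : ℝ) ^ (d + e) := by
      filter_upwards [Filter.eventually_ge_atTop n] with d hd
      have hnd : n ≤ p ^ d := hd.trans (Nat.lt_pow_self hp1 : d < p ^ d).le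
      have hle : m * (p ^ d - n + 1) ≤ sSup (S' (d + e)) :=
        le_csSup (hBdd (d + e)) (hmem d hnd)
      have hle' : ((m * (p ^ d - n + 1) : ℕ) : ℝ) ≤ ((sSup (S' (d + e)) : ℕ) : ℝ) := by
        exact_mod_cast hle
      gcongr
    -- limit of the lower comparison sequence is m / p ^ e
    have hlim : Filter.Tendsto
        (fun d : ℕ => ((m * (p ^ d - n + 1) : ℕ) : ℝ) / (p : ℝ) ^ (d + e))
        Filter.atTop (nhds ((m : ℝ) / (p : ℝ) ^ e)) := by
      have heq : ∀ᶠ d : ℕ in Filter.atTop,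
          (m : ℝ) / (p : ℝ) ^ e
              - ((m : ℝ) * ((n : ℝ) - 1) / (p : ℝ) ^ e) * ((p : ℝ)⁻¹) ^ d
            = ((m * (p ^ d - n + 1) : ℕ) : ℝ) / (p : ℝ) ^ (d + e) := by
        filter_upwards [Filter.eventually_ge_atTop n] with d hd
        have hnd : n ≤ p ^ d := hd.trans (Nat.lt_pow_self hp1 : d < p ^ d).le
        have hc : ((m * (p ^ d - n + 1) : ℕ) : ℝ)
            = (m : ℝ) * ((p : ℝ) ^ d - (n : ℝ) + 1) := by
          push_cast [hnd]
          ring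
        rw [hc, pow_add]
        have hpd := hpe d
        have hpee := hpe e
        rw [inv_pow]
        field_simp
        ring
      refine Filter.Tendsto.congr' heq ?_
      have h0 : Filter.Tendsto (fun d : ℕ => ((p : ℝ)⁻¹) ^ d) Filter.atTop (nhds 0) :=
        tendsto_pow_atTop_nhds_zero_of_lt_one (by positivity)
          (by rw [inv_lt_one_iff₀]; right; exact_mod_cast hp1)
      have := (tendsto_const_nhds (x := (m : ℝ) / (p : ℝ) ^ e)
        (f := Filter.atTop (α := ℕ))).sub
        (h0.const_mul ((m : ℝ) * ((n : ℝ) - 1) / (p : ℝ) ^ e))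
      simpa using this
    have hLsub : Filter.Tendsto
        (fun d : ℕ => ((sSup (S' (d + e)) : ℕ) : ℝ) / (p : ℝ) ^ (d + e))
        Filter.atTop (nhds L) := hL.comp (Filter.tendsto_add_atTop_nat e)
    exact le_of_tendsto_of_tendsto hlim hLsub hcompare
  by_cases hone : S.Nonempty
  · -- S nonempty
    have hSbdd : BddAbove S := ⟨L, fun t ht => hub t ht⟩
    refine le_antisymm ?_ (csSup_le hone hub)
    -- L ≤ sSup S
    refine le_of_tendsto hL (Filter.Eventually.of_forall fun e => ?_)
    by_cases hne : (S' e).Nonempty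
    · obtain ⟨x, hx, hnot⟩ := Nat.sSup_mem hne (hBdd e)
      have hz := (stepA p φ hφ hgen J x e).2 hnot
      have hmemS : ((sSup (S' e) : ℕ) : ℝ) / (p : ℝ) ^ e ∈ S :=
        ⟨sSup (S' e), e, rfl, x, mem_intClosure_of_mem hx, hz⟩
      exact le_csSup hSbdd hmemS
    · have hempty : S' e = ∅ := Set.not_nonempty_iff_eq_empty.1 hne
      have h0 : sSup {m : ℕ | ∃ x ∈ 𝔞 ^ m, x ∉ frobClosure p (frobPow J (p ^ e))} = 0 := by
        have : {m : ℕ | ∃ x ∈ 𝔞 ^ m, x ∉ frobClosure p (frobPow J (p ^ e))} = (∅ : Set ℕ) :=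
          hempty
        rw [this, csSup_empty]
        rfl
      rw [h0]
      obtain ⟨t, ht⟩ := hone
      have ht0 : 0 ≤ t := by
        obtain ⟨m', e', hte, -⟩ := ht
        rw [hte]
        positivity
      have hfin : (0 : ℝ) ≤ sSup S := ht0.trans (le_csSup hSbdd ht)
      simpa using hfin
  · -- S empty
    have hSempty : S = ∅ := Set.not_nonempty_iff_eq_empty.1 hone
    have hS'empty : ∀ e, S' e = ∅ := by
      intro e
      rw [Set.eq_empty_iff_forall_notMem]
      rintro m ⟨x, hx, hnot⟩
      have hz := (stepA p φ hφ hgen J x e).2 hnot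
      have : ((m : ℕ) : ℝ) / (p : ℝ) ^ e ∈ S :=
        ⟨m, e, rfl, x, mem_intClosure_of_mem hx, hz⟩
      rw [hSempty] at this
      exact this
    have hzero : (fun e : ℕ =>
        ((sSup {m : ℕ | ∃ x ∈ 𝔞 ^ m, x ∉ frobClosure p (frobPow J (p ^ e))} : ℕ) : ℝ)
          / (p : ℝ) ^ e) = fun _ => (0 : ℝ) := by
      funext e
      have := hS'empty e
      rw [hS'] at this
      have h0 : {m : ℕ | ∃ x ∈ 𝔞 ^ m, x ∉ frobClosure p (frobPow J (p ^ e))} = (∅ : Set ℕ) :=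
        this
      rw [h0, csSup_empty]
      norm_num
    rw [hzero] at hL
    have hL0 : L = 0 := tendsto_nhds_unique hL tendsto_const_nhds
    rw [hL0, hSempty, Real.sSup_empty]
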